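/- For every integer n ≥ 2, every γ with 1 < γ ≤ 2, and every p ∈ (0,1): (i) θ_{n,γ}(p) ≤ p^{γ−1} + (γ−1) p^{γ−2} (1−p)/n, and (ii) β_{n,γ}(p)^{1/γ} < p + ((γ−1)/(γ n))·(1−p). -/

import Mathlib

open MeasureTheory Real Finset

/-- `theta n γ p = E[(n/N(p))^{1-γ}]` where `N(p)-1 ~ Bin(n-1,p)`. -/
noncomputable def theta (n : ℕ) (γ p : ℝ) : ℝ :=
  ∑ k ∈ Finset.range n,
    ((n - 1).choose k : ℝ) * p ^ k * (1 - p) ^ (n - 1 - k) *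
      ((n : ℝ) / ((k : ℝ) + 1)) ^ (1 - γ)

/-- `beta n γ p = p * theta n γ p`. -/
noncomputable def beta (n : ℕ) (γ p : ℝ) : ℝ := p * theta n γ p

/-- Optimal tontine payout function. -/
noncomputable def Dopt (n : ℕ) (γ r : ℝ) (p : ℝ → ℝ) (t : ℝ) : ℝ :=
  beta n γ (p t) ^ (1 / γ) /
    ∫ s in Set.Ioi (0 : ℝ), Real.exp (-r * s) * beta n γ (p s) ^ (1 / γ)

/-- Cumulative discounted payout of the optimal tontine. -/
noncomputable def Delta (n : ℕ) (γ r : ℝ) (p : ℝ → ℝ) (t : ℝ) : ℝ :=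
  ∫ s in (0 : ℝ)..t, Real.exp (-r * s) * Dopt n γ r p s

lemma binom_sum (m : ℕ) (p : ℝ) :
    ∑ k ∈ Finset.range (m+1), ((m.choose k : ℝ) * p^k * (1-p)^(m-k)) = 1 := by
  have h := add_pow p (1-p) m
  simp only [add_sub_cancel, one_pow] at h
  rw [show ∑ k ∈ Finset.range (m+1), ((m.choose k : ℝ) * p^k * (1-p)^(m-k))
      = ∑ k ∈ Finset.range (m+1), p^k * (1-p)^(m-k) * (m.choose k : ℝ)
    from Finset.sum_congr rfl fun k _ => by ring]
  exact h.symm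

lemma binom_mean (m : ℕ) (p : ℝ) :
    ∑ k ∈ Finset.range (m+2), ((m+1).choose k : ℝ) * p^k * (1-p)^(m+1-k) * k
      = (m+1) * p := by
  rw [Finset.sum_range_succ']
  simp only [Nat.cast_zero, mul_zero, add_zero, Nat.succ_sub_succ]
  push_cast
  have key : ∀ k : ℕ, ((m+1).choose (k+1) : ℝ) * ((k:ℝ)+1) = ((m:ℝ)+1) * (m.choose k) := by
    intro k
    have := Nat.add_one_mul_choose_eq m k
    exact_mod_cast congrArg (Nat.cast : ℕ → ℝ) this.symm
  have : ∑ k ∈ Finset.range (m+1), ((m+1).choose (k+1) : ℝ) * p^(k+1) * (1-p)^(m-k) * ((k:ℝ)+1)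
      = ((m:ℝ)+1) * p * ∑ k ∈ Finset.range (m+1), ((m.choose k : ℝ) * p^k * (1-p)^(m-k)) := by
    rw [Finset.mul_sum]
    refine Finset.sum_congr rfl fun k _ => ?_
    have hk := key k
    calc ((m+1).choose (k+1) : ℝ) * p^(k+1) * (1-p)^(m-k) * ((k:ℝ)+1)
        = (((m+1).choose (k+1) : ℝ) * ((k:ℝ)+1)) * (p^(k+1) * (1-p)^(m-k)) := by ring
      _ = (((m:ℝ)+1) * (m.choose k)) * (p^(k+1) * (1-p)^(m-k)) := by rw [hk]
      _ = ((m:ℝ)+1) * p * ((m.choose k : ℝ) * p^k * (1-p)^(m-k)) := by ring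
  rw [show ∑ k ∈ Finset.range (m+1), ((m+1).choose (k+1) : ℝ) * p^(k+1) * (1-p)^(m-k) * ((k:ℝ)+1)
      = ((m:ℝ)+1) * p * ∑ k ∈ Finset.range (m+1), ((m.choose k : ℝ) * p^k * (1-p)^(m-k)) from this,
    binom_sum, mul_one]

/-- for `1 < γ ≤ 2` and `0 < p < 1`,
`θ_{n,γ}(p) ≤ p^{γ-1} + (γ-1) p^{γ-2} (1-p)/n` and
`β_{n,γ}(p)^{1/γ} < p + ((γ-1)/(γ n)) (1-p)`. -/
theorem theta_beta_tangent_bounds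
    (n : ℕ) (hn : 2 ≤ n) (γ : ℝ) (hγ1 : 1 < γ) (hγ2 : γ ≤ 2)
    (p : ℝ) (hp : p ∈ Set.Ioo (0 : ℝ) 1) :
    theta n γ p ≤ p ^ (γ - 1) + (γ - 1) * p ^ (γ - 2) * (1 - p) / n ∧
    (beta n γ p) ^ (1 / γ) < p + (γ - 1) / (γ * n) * (1 - p) := by
  obtain ⟨hp0, hp1⟩ := hp
  obtain ⟨m, rfl⟩ : ∃ m, n = m + 2 := ⟨n - 2, by omega⟩
  set N : ℝ := (m : ℝ) + 2 with hN
  have hN0 : (0:ℝ) < N := by positivity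
  have hNcast : ((m + 2 : ℕ) : ℝ) = N := by push_cast; ring
  have hγ0 : (0:ℝ) < γ := by linarith
  have h1p : (0:ℝ) < 1 - p := by linarith
  set w : ℕ → ℝ := fun k => ((m+1).choose k : ℝ) * p^k * (1-p)^(m+1-k) with hw
  set z : ℕ → ℝ := fun k => ((k:ℝ)+1)/N with hz
  set q : ℝ := p + (1-p)/N with hq
  have hq0 : 0 < q := by positivity
  have hpq : p < q := by
    have : 0 < (1-p)/N := by positivity
    simp [hq]; linarith
  have hw_nonneg : ∀ k ∈ Finset.range (m+2), 0 ≤ w k := fun k _ => by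
    simp only [hw]; positivity
  have hw_sum : ∑ k ∈ Finset.range (m+2), w k = 1 := binom_sum (m+1) p
  have hmean : ∑ k ∈ Finset.range (m+2), w k * z k = q := by
    have hk : ∑ k ∈ Finset.range (m+2), w k * ((k:ℝ)+1)
        = ((m:ℝ)+1) * p + 1 := by
      have := binom_mean m p
      calc ∑ k ∈ Finset.range (m+2), w k * ((k:ℝ)+1)
          = (∑ k ∈ Finset.range (m+2), w k * (k:ℝ)) + ∑ k ∈ Finset.range (m+2), w k := by
            rw [← Finset.sum_add_distrib]; exact Finset.sum_congr rfl fun k _ => by ring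
        _ = ((m:ℝ)+1) * p + 1 := by
            rw [hw_sum,
              show (∑ k ∈ Finset.range (m+2), w k * (k:ℝ)) = ((m:ℝ)+1)*p from binom_mean m p]
    calc ∑ k ∈ Finset.range (m+2), w k * z k
        = (∑ k ∈ Finset.range (m+2), w k * ((k:ℝ)+1)) / N := by
          rw [Finset.sum_div]; exact Finset.sum_congr rfl fun k _ => by simp only [hz]; ring
      _ = (((m:ℝ)+1) * p + 1) / N := by rw [hk]
      _ = q := by rw [hq, hN]; field_simp; ring
  -- Jensen
  have hconc : ConcaveOn ℝ (Set.Ici 0) fun x : ℝ => x ^ (γ-1) :=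
    Real.concaveOn_rpow (by linarith) (by linarith)
  have hjen := hconc.le_map_sum (t := Finset.range (m+2)) (w := w) (p := z)
    hw_nonneg hw_sum (fun k _ => by
      have : (0:ℝ) ≤ z k := by simp only [hz]; positivity
      simpa using this)
  simp only [smul_eq_mul, hmean] at hjen
  have htheta_eq : theta (m+2) γ p = ∑ k ∈ Finset.range (m+2), w k * (z k) ^ (γ-1) := by
    unfold theta
    refine Finset.sum_congr rfl fun k _ => ?_
    have h1 : (m + 2 - 1 : ℕ) = m + 1 := rfl
    have hx : (0:ℝ) < (k:ℝ)+1 := by positivity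
    have hbase : (((m+2:ℕ):ℝ) / ((k:ℝ)+1)) ^ (1-γ) = (z k) ^ (γ-1) := by
      rw [hNcast, show (1-γ) = -(γ-1) by ring, Real.rpow_neg (by positivity),
        ← Real.inv_rpow (by positivity), inv_div]
    rw [h1, hbase]
  have htheta_le : theta (m+2) γ p ≤ q ^ (γ-1) := by rw [htheta_eq]; exact hjen
  -- tangent bound
  have hps : (0:ℝ) ≤ p ^ (γ-1) := Real.rpow_nonneg hp0.le _
  have hp2 : p ^ (γ-2) = p ^ (γ-1) / p := by
    rw [show γ-2 = γ-1-1 by ring, Real.rpow_sub hp0, Real.rpow_one]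
  have htangent : q ^ (γ-1) ≤ p ^ (γ-1) + (γ-1) * p ^ (γ-2) * (1-p) / N := by
    have hqe : q = p * (1 + (1-p)/N/p) := by rw [hq]; field_simp
    have hbern : (1 + (1-p)/N/p) ^ (γ-1) ≤ 1 + (γ-1) * ((1-p)/N/p) :=
      rpow_one_add_le_one_add_mul_self
        (by have : (0:ℝ) ≤ (1-p)/N/p := by positivity
            linarith) (by linarith) (by linarith)
    calc q ^ (γ-1) = p ^ (γ-1) * (1 + (1-p)/N/p) ^ (γ-1) := by
          rw [hqe, Real.mul_rpow hp0.le (by positivity)]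
      _ ≤ p ^ (γ-1) * (1 + (γ-1) * ((1-p)/N/p)) := by
          exact mul_le_mul_of_nonneg_left hbern hps
      _ = p ^ (γ-1) + (γ-1) * p ^ (γ-2) * (1-p) / N := by
          rw [hp2]; field_simp
  have part1 : theta (m+2) γ p ≤ p ^ (γ-1) + (γ-1) * p ^ (γ-2) * (1-p) / ((m+2:ℕ):ℝ) := by
    rw [hNcast]; exact htheta_le.trans htangent
  refine ⟨part1, ?_⟩
  -- part 2
  have hθnn : 0 ≤ theta (m+2) γ p := by
    rw [htheta_eq]
    exact Finset.sum_nonneg fun k hk => mul_nonneg (hw_nonneg k hk)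
      (Real.rpow_nonneg (by simp only [hz]; positivity) _)
  have hβnn : 0 ≤ beta (m+2) γ p := mul_nonneg hp0.le hθnn
  have hβle : beta (m+2) γ p ≤ p * q ^ (γ-1) :=
    mul_le_mul_of_nonneg_left htheta_le hp0.le
  set a : ℝ := 1/γ with ha
  set b : ℝ := (γ-1)/γ with hb
  have ha0 : 0 < a := by rw [ha]; positivity
  have hb0 : 0 < b := div_pos (by linarith) hγ0
  have hab : a + b = 1 := by rw [ha, hb]; field_simp; ring
  have step1 : (beta (m+2) γ p) ^ (1/γ) ≤ (p * q ^ (γ-1)) ^ (1/γ) :=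
    Real.rpow_le_rpow hβnn hβle (by positivity)
  have step2 : (p * q ^ (γ-1)) ^ (1/γ) = p ^ a * q ^ b := by
    rw [Real.mul_rpow hp0.le (Real.rpow_nonneg hq0.le _), ← Real.rpow_mul hq0.le,
      show (γ-1) * (1/γ) = b by rw [hb]; ring, ha]
  have hlog := strictConcaveOn_log_Ioi.2 (Set.mem_Ioi.2 hp0) (Set.mem_Ioi.2 hq0)
    (ne_of_lt hpq) ha0 hb0 hab
  simp only [smul_eq_mul] at hlog
  have habq : 0 < a * p + b * q := by positivity
  have step3 : p ^ a * q ^ b < a * p + b * q := by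
    rw [Real.rpow_def_of_pos hp0, Real.rpow_def_of_pos hq0, ← Real.exp_add,
      ← Real.exp_log habq]
    exact Real.exp_lt_exp.2 (by linarith [hlog])
  have step4 : a * p + b * q = p + (γ-1) / (γ * N) * (1-p) := by
    rw [ha, hb, hq]
    field_simp
    ring
  calc (beta (m+2) γ p) ^ (1/γ) ≤ p ^ a * q ^ b := step1.trans_eq step2
    _ < a * p + b * q := step3
    _ = p + (γ-1) / (γ * ((m+2:ℕ):ℝ)) * (1-p) := by rw [step4, hNcast]
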